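/- Suppose that for each arm j the reward is an affine function of the j-th population coordinate, r_j(x) = c_j + d_j·x with |d_j| ≤ θ, and define the expected reward map F_j(s) = r_j( (1/N)·Σ_{i=1}^N σ(s^i, j) ) on state profiles s = (s^1,…,s^N) ∈ ℝ^{N×M}. Then for all state profiles s_a, s_b, |F_j(s_a) − F_j(s_b)| ≤ (θ(1−η)β/2)·‖s_a − s_b‖_∞. Consequently, if θ(1−η)β/2 < 1, then F_j is a ‖·‖_∞-contraction in the state profile. -/

import Mathlib

open Finset


lemma abs_softmax_sub_le {M : ℕ} (β : ℝ) (hβ : 0 < β) (j : Fin M)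
    (s t : Fin M → ℝ) (D : ℝ) (hD : ∀ k, |s k - t k| ≤ D) :
    |Real.exp (β * s j) / (∑ k, Real.exp (β * s k)) -
     Real.exp (β * t j) / (∑ k, Real.exp (β * t k))| ≤ β / 2 * D := by
  have : Nonempty (Fin M) := ⟨j⟩
  have hD0 : 0 ≤ D := le_trans (abs_nonneg _) (hD j)
  set u : Fin M → ℝ := fun k => s k - t k with hu
  have hDu : ∀ k, |u k| ≤ D := hD
  set E : ℝ → Fin M → ℝ := fun x k => Real.exp (β * (t k + x * u k)) with hE
  set Z : ℝ → ℝ := fun x => ∑ k, E x k with hZ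
  have hZpos : ∀ x, 0 < Z x := fun x =>
    Finset.sum_pos (fun k _ => Real.exp_pos _) Finset.univ_nonempty
  set f : ℝ → ℝ := fun x => E x j / Z x with hf
  set f' : ℝ → ℝ := fun x =>
    ((β * u j * E x j) * Z x - E x j * (∑ k, β * u k * E x k)) / (Z x)^2 with hf'
  have hE' : ∀ x k, HasDerivAt (fun y => E y k) (β * u k * E x k) x := by
    intro x k
    have h1 : HasDerivAt (fun y : ℝ => β * (t k + y * u k)) (β * u k) x := by
      simpa using (((hasDerivAt_id x).mul_const (u k)).const_add (t k)).const_mul β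
    simpa [hE, mul_comm] using h1.exp
  have hZ' : ∀ x, HasDerivAt Z (∑ k, β * u k * E x k) x := by
    intro x
    exact HasDerivAt.fun_sum (fun k _ => hE' x k)
  have hfd : ∀ x, HasDerivAt f (f' x) x := by
    intro x
    exact (hE' x j).div (hZ' x) (ne_of_gt (hZpos x))
  have hbound : ∀ x : ℝ, |f' x| ≤ β / 2 * D := by
    intro x
    set p : Fin M → ℝ := fun k => E x k / Z x with hp
    have hp0 : ∀ k, 0 ≤ p k := fun k =>
      div_nonneg (Real.exp_pos _).le (hZpos x).le
    have hpsum : ∑ k, p k = 1 := by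
      rw [hp]; rw [← Finset.sum_div]
      exact div_self (ne_of_gt (hZpos x))
    have hpj1 : p j ≤ 1 := by
      rw [← hpsum]
      exact Finset.single_le_sum (fun k _ => hp0 k) (Finset.mem_univ j)
    have hErase : ∑ k ∈ Finset.univ.erase j, p k = 1 - p j := by
      rw [Finset.sum_erase_eq_sub (Finset.mem_univ j), hpsum]
    have hs1 : (∑ k, β * u k * E x k) = β * ∑ k, u k * E x k := by
      rw [Finset.mul_sum]; exact Finset.sum_congr rfl (fun k _ => by ring)
    have hs2 : ∑ k, u k * p k = (∑ k, u k * E x k) / Z x := by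
      rw [Finset.sum_div]
      exact Finset.sum_congr rfl (fun k _ => (mul_div_assoc _ _ _).symm)
    have hs3 : ∑ k ∈ Finset.univ.erase j, (u j - u k) * p k
        = u j - ∑ k, u k * p k := by
      rw [Finset.sum_erase _ (by simp)]
      rw [show ∀ g h : Fin M → ℝ, (∑ k, (g k - h k) * p k) = (∑ k, g k * p k) - ∑ k, h k * p k
        from fun g h => by rw [← Finset.sum_sub_distrib]; exact Finset.sum_congr rfl fun k _ => by ring]
      rw [← Finset.mul_sum, hpsum, mul_one]
    have hZne : Z x ≠ 0 := ne_of_gt (hZpos x)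
    have hkey : f' x = β * p j * (u j - ∑ k, u k * p k) := by
      rw [hs2]
      show (β * u j * E x j * Z x - E x j * ∑ k, β * u k * E x k) / Z x ^ 2
          = β * (E x j / Z x) * (u j - (∑ k, u k * E x k) / Z x)
      rw [hs1]
      field_simp
    have habs : |∑ k ∈ Finset.univ.erase j, (u j - u k) * p k| ≤ 2 * D * (1 - p j) := by
      calc |∑ k ∈ Finset.univ.erase j, (u j - u k) * p k|
          ≤ ∑ k ∈ Finset.univ.erase j, |(u j - u k) * p k| :=
            Finset.abs_sum_le_sum_abs _ _
        _ ≤ ∑ k ∈ Finset.univ.erase j, 2 * D * p k := by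
            refine Finset.sum_le_sum (fun k _ => ?_)
            rw [abs_mul, abs_of_nonneg (hp0 k)]
            refine mul_le_mul_of_nonneg_right ?_ (hp0 k)
            calc |u j - u k| ≤ |u j| + |u k| := abs_sub _ _
              _ ≤ 2 * D := by have := hDu j; have := hDu k; linarith
        _ = 2 * D * (1 - p j) := by rw [← Finset.mul_sum, hErase]
    rw [hkey, ← hs3]
    rw [abs_mul]
    have h1 : |β * p j| = β * p j := abs_of_nonneg (mul_nonneg hβ.le (hp0 j))
    rw [h1]
    have h2 : β * p j * |∑ k ∈ Finset.univ.erase j, (u j - u k) * p k|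
        ≤ β * p j * (2 * D * (1 - p j)) :=
      mul_le_mul_of_nonneg_left habs (mul_nonneg hβ.le (hp0 j))
    refine le_trans h2 ?_
    nlinarith [hp0 j, hpj1, sq_nonneg (1 - 2 * p j), mul_nonneg hβ.le hD0]
  have hmvt := Convex.norm_image_sub_le_of_norm_hasDerivWithin_le
    (f := f) (f' := f') (s := Set.univ) (C := β / 2 * D)
    (fun x _ => (hfd x).hasDerivWithinAt)
    (fun x _ => by simpa [Real.norm_eq_abs] using hbound x)
    convex_univ (Set.mem_univ 0) (Set.mem_univ 1)
  have h10 : f 1 - f 0 = Real.exp (β * s j) / (∑ k, Real.exp (β * s k)) -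
      Real.exp (β * t j) / (∑ k, Real.exp (β * t k)) := by
    simp [hf, hE, hZ, hu]
  rw [← h10]
  simpa [Real.norm_eq_abs] using hmvt


/-- The Hedge stationary policy. -/
noncomputable def hedge (β η : ℝ) {M : ℕ} (s : Fin M → ℝ) (j : Fin M) : ℝ :=
  (1 - η) * Real.exp (β * s j) / (∑ k, Real.exp (β * s k)) + η / M

/-- Corollary 1 of the paper: if the reward of arm `j` is an affine
function `r_j(x) = c_j + d_j·x` of the `j`-th expected population coordinate with
`|d_j| ≤ θ`, then the expected reward map
`F_j(s) = r_j((1/N)·Σ_i σ(s^i,j))` is `(θ(1−η)β/2)`-Lipschitz in `‖·‖_∞`;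
consequently, if `θ(1−η)β/2 < 1`, it is a `‖·‖_∞`-contraction. -/
theorem linear_reward_contraction {N M : ℕ} (hN : 1 ≤ N) (hM : 1 ≤ M)
    (β η θ : ℝ) (hβ : 0 < β) (hη : η ∈ Set.Icc (0 : ℝ) 1) (hθ : 0 ≤ θ)
    (c d : Fin M → ℝ) (hd : ∀ j, |d j| ≤ θ) :
    (∀ (j : Fin M) (sa sb : Fin N → Fin M → ℝ),
      |(c j + d j * ((1 / N) * ∑ i, hedge β η (sa i) j)) -
        (c j + d j * ((1 / N) * ∑ i, hedge β η (sb i) j))|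
        ≤ θ * (1 - η) * β / 2 * ‖sa - sb‖) ∧
    (θ * (1 - η) * β / 2 < 1 →
      ∀ j : Fin M, ∃ C : ℝ, 0 ≤ C ∧ C < 1 ∧
        ∀ sa sb : Fin N → Fin M → ℝ,
          |(c j + d j * ((1 / N) * ∑ i, hedge β η (sa i) j)) -
            (c j + d j * ((1 / N) * ∑ i, hedge β η (sb i) j))|
            ≤ C * ‖sa - sb‖) := by
  have hη0 : (0:ℝ) ≤ η := hη.1
  have hη1 : η ≤ 1 := hη.2
  have hNpos : (0:ℝ) < N := by exact_mod_cast hN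
  have main : ∀ (j : Fin M) (sa sb : Fin N → Fin M → ℝ),
      |(c j + d j * ((1 / N) * ∑ i, hedge β η (sa i) j)) -
        (c j + d j * ((1 / N) * ∑ i, hedge β η (sb i) j))|
        ≤ θ * (1 - η) * β / 2 * ‖sa - sb‖ := by
    intro j sa sb
    set D := ‖sa - sb‖ with hDdef
    have hD0 : 0 ≤ D := norm_nonneg _
    have hDk : ∀ i k, |sa i k - sb i k| ≤ D := by
      intro i k
      have h1 : ‖(sa - sb) i‖ ≤ D := norm_le_pi_norm (sa - sb) i
      have h2 : |(sa - sb) i k| ≤ ‖(sa - sb) i‖ := by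
        simpa [Real.norm_eq_abs] using norm_le_pi_norm ((sa - sb) i) k
      simpa [Pi.sub_apply] using le_trans h2 h1
    have hper : ∀ i, |hedge β η (sa i) j - hedge β η (sb i) j|
        ≤ (1 - η) * (β / 2 * D) := by
      intro i
      have hsoft := abs_softmax_sub_le β hβ j (sa i) (sb i) D (fun k => hDk i k)
      have heq : hedge β η (sa i) j - hedge β η (sb i) j
          = (1 - η) * (Real.exp (β * sa i j) / (∑ k, Real.exp (β * sa i k))
            - Real.exp (β * sb i j) / (∑ k, Real.exp (β * sb i k))) := by
        unfold hedge; ring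
      rw [heq, abs_mul, abs_of_nonneg (by linarith : (0:ℝ) ≤ 1 - η)]
      exact mul_le_mul_of_nonneg_left hsoft (by linarith)
    have hsum : |∑ i, (hedge β η (sa i) j - hedge β η (sb i) j)|
        ≤ N * ((1 - η) * (β / 2 * D)) := by
      calc |∑ i, (hedge β η (sa i) j - hedge β η (sb i) j)|
          ≤ ∑ i, |hedge β η (sa i) j - hedge β η (sb i) j| :=
            Finset.abs_sum_le_sum_abs _ _
        _ ≤ ∑ _i : Fin N, (1 - η) * (β / 2 * D) :=
            Finset.sum_le_sum (fun i _ => hper i)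
        _ = N * ((1 - η) * (β / 2 * D)) := by
            rw [Finset.sum_const, Finset.card_univ, Fintype.card_fin, nsmul_eq_mul]
    have hexp : (c j + d j * ((1 / (N:ℝ)) * ∑ i, hedge β η (sa i) j)) -
        (c j + d j * ((1 / (N:ℝ)) * ∑ i, hedge β η (sb i) j))
        = d j * (1 / (N:ℝ)) * ∑ i, (hedge β η (sa i) j - hedge β η (sb i) j) := by
      rw [Finset.sum_sub_distrib]; ring
    rw [hexp, abs_mul, abs_mul]
    have habs1 : |(1:ℝ)/(N:ℝ)| = 1/(N:ℝ) := abs_of_pos (by positivity)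
    rw [habs1]
    have step : |d j| * (1/(N:ℝ)) * |∑ i, (hedge β η (sa i) j - hedge β η (sb i) j)|
        ≤ θ * (1/(N:ℝ)) * ((N:ℝ) * ((1 - η) * (β / 2 * D))) := by
      have h1 : |d j| * (1/(N:ℝ)) ≤ θ * (1/(N:ℝ)) :=
        mul_le_mul_of_nonneg_right (hd j) (by positivity)
      exact mul_le_mul h1 hsum (abs_nonneg _)
        (mul_nonneg hθ (by positivity))
    refine le_trans step (le_of_eq ?_)
    field_simp
  refine ⟨main, fun hlt j => ⟨θ * (1 - η) * β / 2, ?_, hlt, main j⟩⟩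
  have : (0:ℝ) ≤ θ * (1 - η) * β :=
    mul_nonneg (mul_nonneg hθ (by linarith)) hβ.le
  linarith
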